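/- arXiv:2503.18285 — 2 statements merged into one kernel-verified Lean document; each statement's English description precedes it below -/
import Mathlib

section
/- Let G = A ⋊ B where A is a finite p-group, B a finite group, and F a field of characteristic p. Then Γ(A) = Aug(FA)·FG is a nilpotent ideal of FG, and V(FG) = (1 + Γ(A)) ⋊ V(FB); that is, 1 + Γ(A) is a normal subgroup of V(FG), V(FB) is a subgroup, their intersection is trivial, and their product is V(FG). -/
open MonoidAlgebra

noncomputable def aug (F : Type*) [CommSemiring F] (G : Type*) [Monoid G] :
    MonoidAlgebra F G →ₐ[F] F := MonoidAlgebra.lift F F G 1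

noncomputable def invo (F : Type*) [CommSemiring F] (G : Type*) [Group G] :
    MonoidAlgebra F G → MonoidAlgebra F G := fun x => MonoidAlgebra.ofCoeff (Finsupp.mapDomain (·⁻¹) x.coeff)

noncomputable def normUnits (F : Type*) [CommSemiring F] (G : Type*) [Monoid G] :
    Subgroup (MonoidAlgebra F G)ˣ :=
  (Units.map (aug F G : MonoidAlgebra F G →* F)).ker

noncomputable def grpUnit (F : Type*) [CommSemiring F] (G : Type*) [Group G] :
    G →* (MonoidAlgebra F G)ˣ where
  toFun g :=
    { val := MonoidAlgebra.of F G g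
      inv := MonoidAlgebra.of F G g⁻¹
      val_inv := by rw [← map_mul, mul_inv_cancel, map_one]
      inv_val := by rw [← map_mul, inv_mul_cancel, map_one] }
  map_one' := Units.ext (map_one (MonoidAlgebra.of F G))
  map_mul' g h := Units.ext (map_mul (MonoidAlgebra.of F G) g h)


section KER
variable {F : Type*} [Field F] {G : Type*} [Group G] {Q : Type*} [Group Q]

theorem ker_le_aug_mul_top (f : G →* Q) (s : Q → G) (hs : ∀ q, f (s q) = q)
    (x : MonoidAlgebra F G) (hx : MonoidAlgebra.mapDomain f x = 0) :
    x ∈ (Submodule.span F {y : MonoidAlgebra F G | ∃ h, f h = 1 ∧ y = of F G h - 1} * ⊤ :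
      Submodule F (MonoidAlgebra F G)) := by
  set S : Submodule F (MonoidAlgebra F G) :=
    Submodule.span F {y : MonoidAlgebra F G | ∃ h, f h = 1 ∧ y = of F G h - 1} * ⊤ with hS
  let θ : MonoidAlgebra F G →ₗ[F] MonoidAlgebra F G := MonoidAlgebra.mapDomainLinearMap F F (s ∘ f)
  have hθ : ∀ g : G, θ (of F G g) = of F G (s (f g)) := by
    intro g
    show MonoidAlgebra.mapDomainLinearMap F F (s ∘ f) (MonoidAlgebra.single g 1) = _
    rw [MonoidAlgebra.mapDomainLinearMap_single]; rfl
  have key : ∀ y : MonoidAlgebra F G, y - θ y ∈ S := by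
    intro y
    induction y using MonoidAlgebra.induction_on with
    | of g =>
      rw [hθ]
      have heq : of F G g - of F G (s (f g))
          = (of F G (g * (s (f g))⁻¹) - 1) * of F G (s (f g)) := by
        rw [sub_mul, one_mul, ← map_mul, inv_mul_cancel_right]
      rw [heq]
      exact Submodule.mul_mem_mul (Submodule.subset_span ⟨g * (s (f g))⁻¹, by
        simp [hs], rfl⟩) trivial
    | add a b ha hb =>
      have : a + b - θ (a + b) = (a - θ a) + (b - θ b) := by rw [map_add]; abel
      rw [this]; exact S.add_mem ha hb
    | smul r a ha =>
      have : r • a - θ (r • a) = r • (a - θ a) := by rw [map_smul, smul_sub]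
      rw [this]; exact S.smul_mem _ ha
  have h2 : θ x = 0 := by
    show MonoidAlgebra.ofCoeff (Finsupp.mapDomain (s ∘ f) x.coeff) = 0
    rw [Finsupp.mapDomain_comp]
    have hx' : Finsupp.mapDomain f x.coeff = 0 := congrArg MonoidAlgebra.coeff hx
    rw [hx', Finsupp.mapDomain_zero]; rfl
  have h4 := key x
  rwa [h2, sub_zero] at h4
end KER

section SubmodAux
variable {F : Type*} [Field F] {R : Type*} [Ring R] [Algebra F R]

theorem pow_mono_submod {M N : Submodule F R} (h : M ≤ N) : ∀ k, M ^ k ≤ N ^ k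
  | 0 => le_rfl
  | k+1 => by rw [pow_succ, pow_succ]; exact mul_le_mul' (pow_mono_submod h k) h

theorem mul_top_pow_le {W : Submodule F R} (hswap : (⊤ : Submodule F R) * W ≤ W * ⊤) :
    ∀ k, (W * ⊤) ^ k ≤ W ^ k * ⊤
  | 0 => by rw [pow_zero, pow_zero, one_mul]; exact le_top
  | k+1 => by
    rw [pow_succ, pow_succ]
    calc (W*⊤)^k * (W*⊤) ≤ (W^k * ⊤) * (W * ⊤) :=
          mul_le_mul' (mul_top_pow_le hswap k) le_rfl
    _ = W^k * ((⊤ * W) * ⊤) := by rw [mul_assoc, mul_assoc]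
    _ ≤ W^k * ((W * ⊤) * ⊤) := mul_le_mul' le_rfl (mul_le_mul' hswap le_rfl)
    _ = (W^k * W) * (⊤ * ⊤) := by rw [mul_assoc, mul_assoc]
    _ ≤ (W^k * W) * ⊤ := mul_le_mul' le_rfl le_top

theorem span_singleton_pow (x : R) : ∀ n : ℕ, (Submodule.span F {x}) ^ n = Submodule.span F {x ^ n}
  | 0 => by rw [pow_zero, pow_zero]; exact Submodule.one_eq_span
  | n+1 => by
    rw [pow_succ, span_singleton_pow x n, Submodule.span_mul_span,
      Set.singleton_mul_singleton, ← pow_succ]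

theorem list_prod_mem_pow {M : Submodule F R} :
    ∀ l : List R, (∀ y ∈ l, y ∈ M) → l.prod ∈ M ^ l.length
  | [], _ => by
    rw [List.prod_nil, List.length_nil, pow_zero, Submodule.one_eq_span]
    exact Submodule.subset_span rfl
  | a :: l, h => by
    rw [List.prod_cons, List.length_cons, pow_succ']
    exact Submodule.mul_mem_mul (h a List.mem_cons_self) (list_prod_mem_pow l fun y hy => h y (List.mem_cons_of_mem a hy))
end SubmodAux

theorem aug_nilpotent (p : ℕ) (hp : p.Prime) (F : Type*) [Field F] (hchar : ringChar F = p) :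
    ∀ (n : ℕ) (A : Type _) [Group A] [Finite A], IsPGroup p A → Nat.card A = n →
    ∃ m, 0 < m ∧
      (Submodule.span F {y : MonoidAlgebra F A | ∃ a, y = of F A a - 1}) ^ m = ⊥ := by
  haveI : Fact p.Prime := ⟨hp⟩
  haveI : CharP F p := ringChar.of_eq hchar
  intro n
  induction n using Nat.strong_induction_on with
  | _ n ih =>
  intro A _ _ hA hcardA
  set SA : Submodule F (MonoidAlgebra F A) :=
    Submodule.span F {y : MonoidAlgebra F A | ∃ a, y = of F A a - 1} with hSA
  rcases subsingleton_or_nontrivial A with hsub | hnt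
  · refine ⟨1, one_pos, ?_⟩
    rw [pow_one, hSA, ← le_bot_iff, Submodule.span_le]
    rintro y ⟨a, rfl⟩
    have : a = 1 := Subsingleton.elim a 1
    rw [this, map_one, sub_self]
    exact Submodule.zero_mem ⊥
  · -- find central element z with z ≠ 1, z ^ p = 1
    haveI hcnt : Nontrivial (Subgroup.center A) := hA.center_nontrivial
    have hdvd : p ∣ Nat.card (Subgroup.center A) := by
      obtain ⟨m, hm0, hm⟩ := (hA.to_subgroup (Subgroup.center A)).nontrivial_iff_card.mp hcnt
      exact hm ▸ dvd_pow_self p hm0.ne'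
    obtain ⟨z0, hz0⟩ := exists_prime_orderOf_dvd_card' p hdvd
    set z : A := (z0 : A) with hzdef
    have hz_mem : z ∈ Subgroup.center A := z0.2
    have hz_ne : z ≠ 1 := by
      intro h
      have : z0 = 1 := Subtype.ext h
      rw [this, orderOf_one] at hz0
      exact hp.one_lt.ne' hz0.symm
    have hzp : z ^ p = 1 := by
      have : z0 ^ p = 1 := by rw [← hz0]; exact pow_orderOf_eq_one z0
      have := congrArg (Subtype.val) this
      simpa using this
    set N : Subgroup A := Subgroup.zpowers z with hN
    have hNle : N ≤ Subgroup.center A := Subgroup.zpowers_le.mpr hz_mem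
    haveI hNnormal : N.Normal := by
      constructor
      intro m hm g
      have hcomm : g * m = m * g := Subgroup.mem_center_iff.mp (hNle hm) g
      rw [hcomm, mul_assoc, mul_inv_cancel, mul_one]
      exact hm
    -- cardinality
    have hcard : Nat.card A = Nat.card (A ⧸ N) * Nat.card N :=
      Subgroup.card_eq_card_quotient_mul_card_subgroup N
    have hNnebot : N ≠ ⊥ := by
      intro h
      exact hz_ne (Subgroup.mem_bot.mp (h ▸ Subgroup.mem_zpowers z))
    have hN1 : 1 < Nat.card N := (Subgroup.one_lt_card_iff_ne_bot N).mpr hNnebot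
    have hQpos : 0 < Nat.card (A ⧸ N) := Nat.card_pos
    have hQlt : Nat.card (A ⧸ N) < n := by
      rw [← hcardA, hcard]
      exact (Nat.lt_mul_iff_one_lt_right hQpos).mpr hN1
    obtain ⟨m', hm'0, hm'⟩ := ih (Nat.card (A ⧸ N)) hQlt (A ⧸ N) (hA.to_quotient N) rfl
    set SQ : Submodule F (MonoidAlgebra F (A ⧸ N)) :=
      Submodule.span F {y : MonoidAlgebra F (A ⧸ N) | ∃ a, y = of F (A ⧸ N) a - 1}
    set π : MonoidAlgebra F A →ₐ[F] MonoidAlgebra F (A ⧸ N) :=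
      mapDomainAlgHom F F (QuotientGroup.mk' N) with hπ
    have hπof : ∀ a : A, π (of F A a) = of F (A ⧸ N) (QuotientGroup.mk a) := by
      intro a
      rw [hπ, mapDomainAlgHom_apply]
      show MonoidAlgebra.mapDomain _ (MonoidAlgebra.single a 1) = _
      rw [MonoidAlgebra.mapDomain_single]
      rfl
    set x0 : MonoidAlgebra F A := of F A z - 1 with hx0
    set Wz : Submodule F (MonoidAlgebra F A) := Submodule.span F {x0} with hWz
    set K : Submodule F (MonoidAlgebra F A) := Wz * ⊤ with hK
    -- commutation of x0 with everything
    have hcomm : ∀ y : MonoidAlgebra F A, Commute (of F A z) y := by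
      intro y
      induction y using MonoidAlgebra.induction_on with
      | of g =>
        show of F A z * of F A g = of F A g * of F A z
        rw [← map_mul, ← map_mul, (Subgroup.mem_center_iff.mp hz_mem g)]
      | add a b ha hb => exact Commute.add_right ha hb
      | smul r a ha =>
        show of F A z * (r • a) = (r • a) * of F A z
        rw [mul_smul_comm, smul_mul_assoc, ha]
    -- powers of z
    have hzpow : ∀ nn : ℕ, of F A (z ^ nn) - 1 ∈ K := by
      intro nn
      induction nn with
      | zero => rw [pow_zero, map_one, sub_self]; exact K.zero_mem
      | succ nn ihn =>
        have heq : of F A (z ^ (nn+1)) - 1 = x0 * of F A (z ^ nn) + (of F A (z ^ nn) - 1) := by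
          rw [hx0, sub_mul, one_mul, ← map_mul, ← pow_succ']
          abel
        rw [heq]
        exact K.add_mem (Submodule.mul_mem_mul (Submodule.subset_span rfl) trivial) ihn
    -- SA ^ m' ≤ K
    have hstep : SA ^ m' ≤ K := by
      intro x hx
      have hmapSA : Submodule.map π.toLinearMap SA ≤ SQ := by
        rw [hSA, Submodule.map_span]
        refine Submodule.span_le.mpr ?_
        rintro y ⟨w, ⟨a, rfl⟩, rfl⟩
        refine Submodule.subset_span ⟨QuotientGroup.mk a, ?_⟩
        simp only [AlgHom.toLinearMap_apply]
        rw [map_sub, hπof, map_one]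
      have hπx : π x = 0 := by
        have h1 : Submodule.map π.toLinearMap (SA ^ m') ≤ ⊥ := by
          rw [Submodule.map_pow]
          exact le_trans (pow_mono_submod hmapSA m') (le_of_eq hm')
        simpa using h1 (Submodule.mem_map_of_mem hx)
      have hπx' : MonoidAlgebra.mapDomain (QuotientGroup.mk' N) x = 0 := by
        rw [← mapDomainAlgHom_apply F F]
        exact hπx
      have hker := ker_le_aug_mul_top (F := F) (QuotientGroup.mk' N)
        (fun q => Quotient.out q) (fun q => by simpa using QuotientGroup.out_eq' q) x hπx'
      have hgen : Submodule.span F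
          {y : MonoidAlgebra F A | ∃ h, (QuotientGroup.mk' N) h = 1 ∧ y = of F A h - 1} ≤ K := by
        refine Submodule.span_le.mpr ?_
        rintro y ⟨h, hh1, rfl⟩
        have hhN : h ∈ N := by
          have : h ∈ (QuotientGroup.mk' N).ker := hh1
          rwa [QuotientGroup.ker_mk'] at this
        obtain ⟨nn, hnn⟩ := mem_powers_iff_mem_zpowers.mpr hhN
        rw [← hnn]
        exact hzpow nn
      have : Submodule.span F
          {y : MonoidAlgebra F A | ∃ h, (QuotientGroup.mk' N) h = 1 ∧ y = of F A h - 1} * ⊤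
          ≤ K := by
        calc _ ≤ K * ⊤ := mul_le_mul' hgen le_rfl
        _ = Wz * (⊤ * ⊤) := by rw [hK, mul_assoc]
        _ ≤ Wz * ⊤ := mul_le_mul' le_rfl le_top
      exact this hker
    -- K ^ p = ⊥
    haveI : CharP (MonoidAlgebra F A) p :=
      charP_of_injective_algebraMap (algebraMap F (MonoidAlgebra F A)).injective p
    haveI : ExpChar (MonoidAlgebra F A) p := ExpChar.prime hp
    have hx0p : x0 ^ p = 0 := by
      rw [hx0, sub_pow_expChar_of_commute _ (Commute.one_right _), one_pow, ← map_pow, hzp,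
        map_one, sub_self]
    have hswap : (⊤ : Submodule F (MonoidAlgebra F A)) * Wz ≤ Wz * ⊤ := by
      refine Submodule.mul_le.mpr ?_
      intro m _ w hw
      obtain ⟨c, rfl⟩ := Submodule.mem_span_singleton.mp hw
      have hcx : m * (c • x0) = c • (x0 * m) := by
        rw [mul_smul_comm]
        congr 1
        exact ((hcomm m).sub_left (Commute.one_left m)).symm.eq
      rw [hcx]
      exact Submodule.smul_mem _ _ (Submodule.mul_mem_mul (Submodule.subset_span rfl) trivial)
    have hKp : K ^ p ≤ ⊥ := by
      calc K ^ p ≤ Wz ^ p * ⊤ := mul_top_pow_le hswap p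
      _ = Submodule.span F {x0 ^ p} * ⊤ := by rw [span_singleton_pow]
      _ = ⊥ * ⊤ := by rw [hx0p, Submodule.span_zero_singleton]
      _ = ⊥ := by rw [Submodule.bot_mul]
    refine ⟨m' * p, Nat.mul_pos hm'0 hp.pos, ?_⟩
    rw [← le_bot_iff, pow_mul]
    exact le_trans (pow_mono_submod hstep p) hKp


section Part2
variable {F : Type*} [Field F] {G : Type*} [Group G]

theorem mem_normUnits_iff (u : (MonoidAlgebra F G)ˣ) :
    u ∈ normUnits F G ↔ aug F G (u : MonoidAlgebra F G) = 1 := by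
  rw [normUnits, MonoidHom.mem_ker, Units.ext_iff]
  simp

theorem aug_of (g : G) : aug F G (of F G g) = 1 := by
  simp [aug]

end Part2

theorem stmt10 (p : ℕ) (hp : p.Prime)
    (F : Type*) [Field F] (hchar : ringChar F = p)
    (A : Type*) [Group A] [Finite A] (hA : IsPGroup p A)
    (B : Type*) [Group B] [Finite B] (φ : B →* MulAut A) :
    (∃ k : ℕ, 0 < k ∧ ∀ x : Fin k → MonoidAlgebra F (A ⋊[φ] B),
      (∀ i, x i ∈ RingHom.ker (MonoidAlgebra.mapDomainRingHom F
        (SemidirectProduct.rightHom : A ⋊[φ] B →* B))) → (List.ofFn x).prod = 0) ∧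
    ∃ N VB : Subgroup (MonoidAlgebra F (A ⋊[φ] B))ˣ,
      (N : Set (MonoidAlgebra F (A ⋊[φ] B))ˣ) =
        {u : (MonoidAlgebra F (A ⋊[φ] B))ˣ | (u : MonoidAlgebra F (A ⋊[φ] B)) - 1 ∈ RingHom.ker (MonoidAlgebra.mapDomainRingHom F
          (SemidirectProduct.rightHom : A ⋊[φ] B →* B))} ∧
      (VB : Set (MonoidAlgebra F (A ⋊[φ] B))ˣ) =
        {u : (MonoidAlgebra F (A ⋊[φ] B))ˣ | u ∈ normUnits F (A ⋊[φ] B) ∧ (u : MonoidAlgebra F (A ⋊[φ] B)) ∈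
          Set.range (MonoidAlgebra.mapDomainRingHom F (SemidirectProduct.inr : B →* A ⋊[φ] B))} ∧
      N ≤ normUnits F (A ⋊[φ] B) ∧
      (∀ v ∈ normUnits F (A ⋊[φ] B), ∀ x ∈ N, v * x * v⁻¹ ∈ N) ∧
      N ⊓ VB = ⊥ ∧ N ⊔ VB = normUnits F (A ⋊[φ] B) := by
  classical
  set G := A ⋊[φ] B with hGdef
  set ρ : MonoidAlgebra F G →+* MonoidAlgebra F B :=
    MonoidAlgebra.mapDomainRingHom F (SemidirectProduct.rightHom : G →* B) with hρ
  set σ : MonoidAlgebra F B →+* MonoidAlgebra F G :=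
    MonoidAlgebra.mapDomainRingHom F (SemidirectProduct.inr : B →* G) with hσ
  have hρσ : ∀ x : MonoidAlgebra F B, ρ (σ x) = x := by
    intro x
    have hco : (⇑(SemidirectProduct.rightHom : G →* B)) ∘ (⇑(SemidirectProduct.inr : B →* G))
        = id := funext fun b => SemidirectProduct.rightHom_inr b
    apply MonoidAlgebra.coeff_injective
    show Finsupp.mapDomain (⇑(SemidirectProduct.rightHom : G →* B))
      (Finsupp.mapDomain (⇑(SemidirectProduct.inr : B →* G)) x.coeff) = x.coeff
    rw [← Finsupp.mapDomain_comp, hco, Finsupp.mapDomain_id]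
  have hρof : ∀ g : G, ρ (of F G g) = of F B (SemidirectProduct.rightHom g) := by
    intro g
    rw [hρ, mapDomainRingHom_apply]
    show MonoidAlgebra.mapDomain _ (MonoidAlgebra.single g 1) = _
    rw [MonoidAlgebra.mapDomain_single]
    rfl
  have hσof : ∀ b : B, σ (of F B b) = of F G (SemidirectProduct.inr b) := by
    intro b
    rw [hσ, mapDomainRingHom_apply]
    show MonoidAlgebra.mapDomain _ (MonoidAlgebra.single b 1) = _
    rw [MonoidAlgebra.mapDomain_single]
    rfl
  have haug : ∀ x : MonoidAlgebra F G, aug F B (ρ x) = aug F G x := by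
    intro x
    induction x using MonoidAlgebra.induction_on with
    | of g => rw [hρof, aug_of, aug_of]
    | add a b ha hb => rw [map_add, map_add, map_add, ha, hb]
    | smul r a ha =>
      have : ρ (r • a) = r • ρ a := by
        rw [hρ, mapDomainRingHom_apply, mapDomainRingHom_apply]
        exact MonoidAlgebra.mapDomain_smul _ r a
      rw [this, map_smul, map_smul, ha]
  have haug2 : ∀ y : MonoidAlgebra F B, aug F G (σ y) = aug F B y := by
    intro y
    induction y using MonoidAlgebra.induction_on with
    | of g => rw [hσof, aug_of, aug_of]
    | add a b ha hb => rw [map_add, map_add, map_add, ha, hb]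
    | smul r a ha =>
      have : σ (r • a) = r • σ a := by
        rw [hσ, mapDomainRingHom_apply, mapDomainRingHom_apply]
        exact MonoidAlgebra.mapDomain_smul _ r a
      rw [this, map_smul, map_smul, ha]
  constructor
  · -- nilpotency part
    obtain ⟨m, hm0, hmA⟩ := aug_nilpotent p hp F hchar (Nat.card A) A hA rfl
    set SA : Submodule F (MonoidAlgebra F A) :=
      Submodule.span F {y : MonoidAlgebra F A | ∃ a, y = of F A a - 1} with hSA
    set SG : Submodule F (MonoidAlgebra F G) :=
      Submodule.span F {y : MonoidAlgebra F G | ∃ a, y = of F G (SemidirectProduct.inl a) - 1}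
      with hSG
    set ι : MonoidAlgebra F A →ₐ[F] MonoidAlgebra F G :=
      mapDomainAlgHom F F (SemidirectProduct.inl : A →* G) with hι
    have hιof : ∀ a : A, ι (of F A a) = of F G (SemidirectProduct.inl a) := by
      intro a
      rw [hι, mapDomainAlgHom_apply]
      show MonoidAlgebra.mapDomain _ (MonoidAlgebra.single a 1) = _
      rw [MonoidAlgebra.mapDomain_single]
      rfl
    have hSG_eq : SG = Submodule.map ι.toLinearMap SA := by
      rw [hSA, hSG, Submodule.map_span]
      congr 1
      ext y
      constructor
      · rintro ⟨a, rfl⟩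
        exact ⟨of F A a - 1, ⟨a, rfl⟩, by
          simp only [AlgHom.toLinearMap_apply, map_sub, map_one, hιof]⟩
      · rintro ⟨w, ⟨a, rfl⟩, rfl⟩
        exact ⟨a, by simp only [AlgHom.toLinearMap_apply, map_sub, map_one, hιof]⟩
    have hSGm : SG ^ m = ⊥ := by
      rw [hSG_eq, ← Submodule.map_pow, hmA, Submodule.map_bot]
    have hmulgen : ∀ (a : A) (y : MonoidAlgebra F G),
        y * (of F G (SemidirectProduct.inl a) - 1) ∈ SG * ⊤ := by
      intro a y
      induction y using MonoidAlgebra.induction_on with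
      | of g =>
        have hker : g * SemidirectProduct.inl a * g⁻¹ ∈
            (SemidirectProduct.rightHom : G →* B).ker := by
          rw [MonoidHom.mem_ker, map_mul, map_mul, map_inv, SemidirectProduct.rightHom_inl,
            mul_one, mul_inv_cancel]
        rw [← SemidirectProduct.range_inl_eq_ker_rightHom] at hker
        obtain ⟨a', ha'⟩ := hker
        have hconj : SemidirectProduct.inl a' * g = g * SemidirectProduct.inl a := by
          rw [ha', mul_assoc, inv_mul_cancel, mul_one]
        have heq : of F G g * (of F G (SemidirectProduct.inl a) - 1)
            = (of F G (SemidirectProduct.inl a') - 1) * of F G g := by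
          rw [mul_sub, sub_mul, one_mul, mul_one, ← map_mul, ← map_mul, hconj]
        rw [heq]
        exact Submodule.mul_mem_mul (Submodule.subset_span ⟨a', rfl⟩) trivial
      | add f g hf hg =>
        rw [add_mul]
        exact Submodule.add_mem _ hf hg
      | smul r f hf =>
        rw [smul_mul_assoc]
        exact Submodule.smul_mem _ _ hf
    have hswap : (⊤ : Submodule F (MonoidAlgebra F G)) * SG ≤ SG * ⊤ := by
      refine Submodule.mul_le.mpr ?_
      intro y _ s hs
      induction hs using Submodule.span_induction with
      | mem s hsmem =>
        obtain ⟨a, rfl⟩ := hsmem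
        exact hmulgen a y
      | zero =>
        rw [mul_zero]
        exact Submodule.zero_mem _
      | add s t _ _ hs ht =>
        rw [mul_add]
        exact Submodule.add_mem _ hs ht
      | smul r s _ hsr =>
        rw [mul_smul_comm]
        exact Submodule.smul_mem _ _ hsr
    have hIle : ∀ x : MonoidAlgebra F G, x ∈ RingHom.ker ρ → x ∈ SG * ⊤ := by
      intro x hx
      have hx0 : MonoidAlgebra.mapDomain (SemidirectProduct.rightHom : G →* B) x = 0 := by
        have := RingHom.mem_ker.mp hx
        rwa [hρ, mapDomainRingHom_apply] at this
      have hker := ker_le_aug_mul_top (F := F) (SemidirectProduct.rightHom : G →* B)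
        (fun b => SemidirectProduct.inr b) (fun b => SemidirectProduct.rightHom_inr b) x hx0
      have hgen : Submodule.span F
          {y : MonoidAlgebra F G | ∃ h, (SemidirectProduct.rightHom : G →* B) h = 1 ∧
            y = of F G h - 1} ≤ SG := by
        refine Submodule.span_le.mpr ?_
        rintro y ⟨h, hh1, rfl⟩
        have : h ∈ (SemidirectProduct.inl : A →* G).range := by
          rw [SemidirectProduct.range_inl_eq_ker_rightHom]
          exact hh1
        obtain ⟨a, rfl⟩ := this
        exact Submodule.subset_span ⟨a, rfl⟩
      exact (mul_le_mul' hgen (le_refl ⊤)) hker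
    refine ⟨m, hm0, ?_⟩
    intro x hxmem
    have hprod : (List.ofFn x).prod ∈ (SG * ⊤) ^ m := by
      have := list_prod_mem_pow (M := SG * ⊤) (List.ofFn x) ?_
      · rwa [List.length_ofFn] at this
      · intro y hy
        obtain ⟨i, rfl⟩ := List.mem_ofFn.mp hy
        exact hIle _ (hxmem i)
    have hb : ((SG * ⊤) ^ m : Submodule F (MonoidAlgebra F G)) ≤ ⊥ := by
      calc (SG * ⊤) ^ m ≤ SG ^ m * ⊤ := mul_top_pow_le hswap m
      _ = ⊥ := by rw [hSGm, Submodule.bot_mul]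
    simpa using hb hprod
  · -- group-theoretic part
    refine ⟨(Units.map ρ.toMonoidHom).ker,
      Subgroup.map (Units.map σ.toMonoidHom) (normUnits F B), ?_, ?_, ?_, ?_, ?_, ?_⟩
    · -- N set description
      ext u
      simp only [SetLike.mem_coe, MonoidHom.mem_ker, Set.mem_setOf_eq, RingHom.mem_ker,
        Units.ext_iff, Units.coe_map, Units.val_one, map_sub, map_one]
      rw [sub_eq_zero]
      rfl
    · -- VB set description
      ext u
      constructor
      · rintro ⟨w, hw, rfl⟩
        refine ⟨?_, ⟨(w : MonoidAlgebra F B), ?_⟩⟩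
        · rw [mem_normUnits_iff]
          have : ((Units.map σ.toMonoidHom w : (MonoidAlgebra F G)ˣ) : MonoidAlgebra F G)
              = σ (w : MonoidAlgebra F B) := rfl
          rw [this, haug2]
          exact (mem_normUnits_iff w).mp hw
        · rfl
      · rintro ⟨hu1, y, hy⟩
        have hval : σ y = (u : MonoidAlgebra F G) := hy
        have hinv1 : y * ρ ((u⁻¹ : (MonoidAlgebra F G)ˣ) : MonoidAlgebra F G) = 1 := by
          have : ρ (σ y) * ρ ((u⁻¹ : (MonoidAlgebra F G)ˣ) : MonoidAlgebra F G) = 1 := by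
            rw [← map_mul, hval, Units.mul_inv, map_one]
          rwa [hρσ] at this
        have hinv2 : ρ ((u⁻¹ : (MonoidAlgebra F G)ˣ) : MonoidAlgebra F G) * y = 1 := by
          have : ρ ((u⁻¹ : (MonoidAlgebra F G)ˣ) : MonoidAlgebra F G) * ρ (σ y) = 1 := by
            rw [← map_mul, hval, Units.inv_mul, map_one]
          rwa [hρσ] at this
        set w : (MonoidAlgebra F B)ˣ :=
          ⟨y, ρ ((u⁻¹ : (MonoidAlgebra F G)ˣ) : MonoidAlgebra F G), hinv1, hinv2⟩ with hw
        refine ⟨w, ?_, ?_⟩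
        · show w ∈ normUnits F B
          rw [mem_normUnits_iff]
          show aug F B y = 1
          rw [← haug2, hval]
          exact (mem_normUnits_iff u).mp hu1
        · exact Units.ext hval
    · -- N ≤ normUnits
      intro u hu
      rw [mem_normUnits_iff]
      have hρu : ρ (u : MonoidAlgebra F G) = 1 := by
        have := MonoidHom.mem_ker.mp hu
        rw [Units.ext_iff] at this
        exact this
      rw [← haug, hρu, map_one]
    · -- normality
      intro v _ x hx
      exact (MonoidHom.normal_ker _).conj_mem x hx v
    · -- trivial intersection
      rw [eq_bot_iff]
      intro u hu
      obtain ⟨hu1, hu2⟩ := Subgroup.mem_inf.mp hu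
      obtain ⟨w, _, rfl⟩ := hu2
      have hval : ρ (σ (w : MonoidAlgebra F B)) = 1 := by
        have := MonoidHom.mem_ker.mp hu1
        rw [Units.ext_iff] at this
        exact this
      rw [hρσ] at hval
      have hw1 : w = 1 := Units.ext hval
      rw [Subgroup.mem_bot, hw1, map_one]
    · -- sup
      refine le_antisymm (sup_le ?_ ?_) ?_
      · intro u hu
        rw [mem_normUnits_iff]
        have hρu : ρ (u : MonoidAlgebra F G) = 1 := by
          have := MonoidHom.mem_ker.mp hu
          rw [Units.ext_iff] at this
          exact this
        rw [← haug, hρu, map_one]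
      · rintro u ⟨w, hw, rfl⟩
        rw [mem_normUnits_iff]
        have : ((Units.map σ.toMonoidHom w : (MonoidAlgebra F G)ˣ) : MonoidAlgebra F G)
            = σ (w : MonoidAlgebra F B) := rfl
        rw [this, haug2]
        exact (mem_normUnits_iff w).mp hw
      · intro v hv
        set w : (MonoidAlgebra F B)ˣ := Units.map ρ.toMonoidHom v with hwdef
        set u : (MonoidAlgebra F G)ˣ := Units.map σ.toMonoidHom w with hudef
        have hwmem : w ∈ normUnits F B := by
          rw [mem_normUnits_iff]
          show aug F B (ρ (v : MonoidAlgebra F G)) = 1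
          rw [haug]
          exact (mem_normUnits_iff v).mp hv
        have huVB : u ∈ Subgroup.map (Units.map σ.toMonoidHom) (normUnits F B) :=
          ⟨w, hwmem, rfl⟩
        have hnN : v * u⁻¹ ∈ (Units.map ρ.toMonoidHom).ker := by
          rw [MonoidHom.mem_ker, Units.ext_iff]
          show ρ ((v * u⁻¹ : (MonoidAlgebra F G)ˣ) : MonoidAlgebra F G) = 1
          have hval : ((v * u⁻¹ : (MonoidAlgebra F G)ˣ) : MonoidAlgebra F G)
              = (v : MonoidAlgebra F G) * ((u⁻¹ : (MonoidAlgebra F G)ˣ) : MonoidAlgebra F G) :=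
            rfl
          rw [hval, map_mul]
          have hu_inv : ((u⁻¹ : (MonoidAlgebra F G)ˣ) : MonoidAlgebra F G)
              = σ (((w⁻¹ : (MonoidAlgebra F B)ˣ) : MonoidAlgebra F B)) := by
            rw [hudef, ← map_inv]
            rfl
          rw [hu_inv, hρσ]
          show ρ (v : MonoidAlgebra F G) * ((w⁻¹ : (MonoidAlgebra F B)ˣ) : MonoidAlgebra F B) = 1
          have : ρ (v : MonoidAlgebra F G) = (w : MonoidAlgebra F B) := rfl
          rw [this, Units.mul_inv]
        have hveq : v = (v * u⁻¹) * u := by rw [inv_mul_cancel_right]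
        rw [hveq]
        exact Subgroup.mul_mem _ ((SetLike.le_def.mp le_sup_left) hnN) ((SetLike.le_def.mp le_sup_right) huVB)
end

section
/- Let G = A ⋊ ⟨b⟩ with A a finite abelian p-group and b of odd prime order q ≠ p, and F a field of characteristic p. Then the centralizer C_{1+Γ(A)}(b) of b in 1 + Γ(A) is an abelian group. -/
open MonoidAlgebra

section aux

open SemidirectProduct

variable {F : Type*} [Field F] {A B : Type*} [CommGroup A] [Group B] {φ : B →* MulAut A}

/-- Conjugation by `inr c` as an equiv of the semidirect product. -/
def conjE (φ : B →* MulAut A) (c : B) : (A ⋊[φ] B) ≃ (A ⋊[φ] B) :=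
  (Equiv.mulLeft (inr c)).trans (Equiv.mulRight (inr c)⁻¹)

lemma conjE_apply (c : B) (g : A ⋊[φ] B) : conjE φ c g = inr c * g * (inr c)⁻¹ := rfl

lemma conjE_symm_apply (c : B) (g : A ⋊[φ] B) :
    (conjE φ c).symm g = (inr c)⁻¹ * g * inr c := by
  simp [conjE, mul_assoc]

lemma conjE_symm_right (hB : ∀ c d : B, c * d = d * c) (c : B) (g : A ⋊[φ] B) :
    ((conjE φ c).symm g).right = g.right := by
  rw [conjE_symm_apply]
  simp only [mul_right, inv_right, right_inr]
  rw [hB c⁻¹ g.right, mul_assoc, inv_mul_cancel, mul_one]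

lemma key_id (hB : ∀ c d : B, c * d = d * c) (g₁ g₂ : A ⋊[φ] B) :
    (conjE φ g₁.right g₂) * ((conjE φ g₂.right).symm g₁) = g₁ * g₂ := by
  rw [conjE_apply, conjE_symm_apply]
  have hc : ∀ s r : B, s * r * s⁻¹ = r := fun s r => by rw [hB s r, mul_inv_cancel_right]
  have hc' : ∀ s r : B, s⁻¹ * r * s = r := fun s r => by rw [hB s⁻¹ r, inv_mul_cancel_right]
  ext
  · simp only [mul_left, mul_right, inv_left, inv_right, left_inr, right_inr,
      map_one, map_mul, map_inv, one_mul, mul_one]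
    have hφ : φ g₁.right * φ g₂.right * (φ g₁.right)⁻¹ = φ g₂.right := by
      rw [← map_mul, hB, map_mul, mul_inv_cancel_right]
    rw [hφ]
    simp [mul_comm]
  · simp only [mul_right, inv_right, right_inr]
    rw [hc, hc', hB]

lemma expand_mul [Fintype (A ⋊[φ] B)] (w z : MonoidAlgebra F (A ⋊[φ] B)) :
    w * z = ∑ g₁ : A ⋊[φ] B, ∑ g₂ : A ⋊[φ] B,
      MonoidAlgebra.single (g₁ * g₂) (w.coeff g₁ * z.coeff g₂) := by
  classical
  rw [MonoidAlgebra.mul_def]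
  rw [Finsupp.sum_fintype _ _ (fun g₁ => by simp)]
  exact Finset.sum_congr rfl fun g₁ _ =>
    Finsupp.sum_fintype _ _ (fun g₂ => by simp)

lemma comm_of_conj_inv [Fintype (A ⋊[φ] B)] (hB : ∀ c d : B, c * d = d * c)
    (u v : MonoidAlgebra F (A ⋊[φ] B))
    (hu : ∀ c : B, ∀ g : A ⋊[φ] B, u.coeff (conjE φ c g) = u.coeff g)
    (hv : ∀ c : B, ∀ g : A ⋊[φ] B, v.coeff (conjE φ c g) = v.coeff g) :
    u * v = v * u := by
  symm
  have hu' : ∀ c : B, ∀ g : A ⋊[φ] B, u.coeff ((conjE φ c).symm g) = u.coeff g := by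
    intro c g
    conv_rhs => rw [← Equiv.apply_symm_apply (conjE φ c) g, hu]
  calc v * u = ∑ g₂ : A ⋊[φ] B, ∑ g₁ : A ⋊[φ] B,
        MonoidAlgebra.single (g₂ * g₁) (v.coeff g₂ * u.coeff g₁) := expand_mul v u
    _ = ∑ g₁ : A ⋊[φ] B, ∑ g₂ : A ⋊[φ] B,
        MonoidAlgebra.single (g₂ * g₁) (v.coeff g₂ * u.coeff g₁) := Finset.sum_comm
    _ = ∑ g₁ : A ⋊[φ] B, ∑ g₂ : A ⋊[φ] B,
        MonoidAlgebra.single ((conjE φ g₁.right g₂) * g₁) (v.coeff g₂ * u.coeff g₁) := by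
      refine Finset.sum_congr rfl fun g₁ _ => ?_
      rw [← Equiv.sum_comp (conjE φ g₁.right)
        (fun g₂ => MonoidAlgebra.single (g₂ * g₁) (v.coeff g₂ * u.coeff g₁))]
      exact Finset.sum_congr rfl fun g₂ _ => by rw [hv]
    _ = ∑ g₂ : A ⋊[φ] B, ∑ g₁ : A ⋊[φ] B,
        MonoidAlgebra.single ((conjE φ g₁.right g₂) * g₁) (v.coeff g₂ * u.coeff g₁) := Finset.sum_comm
    _ = ∑ g₂ : A ⋊[φ] B, ∑ g₁ : A ⋊[φ] B,
        MonoidAlgebra.single (g₁ * g₂) (v.coeff g₂ * u.coeff g₁) := by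
      refine Finset.sum_congr rfl fun g₂ _ => ?_
      rw [← Equiv.sum_comp ((conjE φ g₂.right).symm)
        (fun g₁ => MonoidAlgebra.single ((conjE φ g₁.right g₂) * g₁) (v.coeff g₂ * u.coeff g₁))]
      refine Finset.sum_congr rfl fun g₁ _ => ?_
      beta_reduce
      rw [conjE_symm_right hB, key_id hB, hu']
    _ = ∑ g₁ : A ⋊[φ] B, ∑ g₂ : A ⋊[φ] B,
        MonoidAlgebra.single (g₁ * g₂) (v.coeff g₂ * u.coeff g₁) := Finset.sum_comm
    _ = ∑ g₁ : A ⋊[φ] B, ∑ g₂ : A ⋊[φ] B,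
        MonoidAlgebra.single (g₁ * g₂) (u.coeff g₁ * v.coeff g₂) := by
      simp [mul_comm]
    _ = u * v := (expand_mul u v).symm

lemma conj_inv_of_commute (b : B) (hb : ∀ g : B, g ∈ Subgroup.zpowers b)
    (x : (MonoidAlgebra F (A ⋊[φ] B))ˣ)
    (hx : Commute x (grpUnit F (A ⋊[φ] B) (inr b))) :
    ∀ c : B, ∀ g : A ⋊[φ] B,
      (↑x : MonoidAlgebra F (A ⋊[φ] B)).coeff (conjE φ c g) = (↑x : MonoidAlgebra F (A ⋊[φ] B)).coeff g := by
  set t : A ⋊[φ] B := inr b with ht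
  set u : MonoidAlgebra F (A ⋊[φ] B) := ↑x with hu
  have hval : u * MonoidAlgebra.single t 1 = MonoidAlgebra.single t 1 * u := by
    have h0 := congrArg Units.val hx
    simp only [Units.val_mul] at h0
    exact h0
  have hu1 : ∀ g : A ⋊[φ] B, u.coeff (t * g * t⁻¹) = u.coeff g := by
    intro g
    have h2 := congrArg (fun w : MonoidAlgebra F (A ⋊[φ] B) => w.coeff (t * g)) hval
    simp only [MonoidAlgebra.mul_single_apply, MonoidAlgebra.single_mul_apply, one_mul,
      mul_one, inv_mul_cancel_left] at h2
    exact h2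
  have hu1' : ∀ g : A ⋊[φ] B, u.coeff (t⁻¹ * g * t) = u.coeff g := by
    intro g
    have h3 := hu1 (t⁻¹ * g * t)
    rw [show t * (t⁻¹ * g * t) * t⁻¹ = g by group] at h3
    exact h3.symm
  have huz : ∀ n : ℤ, ∀ g : A ⋊[φ] B, u.coeff (t ^ n * g * (t ^ n)⁻¹) = u.coeff g := by
    intro n
    induction n using Int.induction_on with
    | zero => intro g; simp
    | succ k ih =>
      intro g
      rw [show t ^ ((k : ℤ) + 1) * g * (t ^ ((k : ℤ) + 1))⁻¹
          = t ^ (k : ℤ) * (t * g * t⁻¹) * (t ^ (k : ℤ))⁻¹ by group]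
      rw [ih, hu1]
    | pred k ih =>
      intro g
      rw [show t ^ (-(k : ℤ) - 1) * g * (t ^ (-(k : ℤ) - 1))⁻¹
          = t ^ (-(k : ℤ)) * (t⁻¹ * g * t) * (t ^ (-(k : ℤ)))⁻¹ by group]
      rw [ih, hu1']
  intro c g
  obtain ⟨n, rfl⟩ := hb c
  rw [conjE_apply, show (inr (b ^ n) : A ⋊[φ] B) = t ^ n from
    map_zpow (inr : B →* A ⋊[φ] B) b n]
  exact huz n g

end aux

theorem stmt13 (p q : ℕ) (hp : p.Prime) (hq : q.Prime) (hqodd : Odd q) (hqp : q ≠ p)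
    (F : Type*) [Field F] (hchar : ringChar F = p)
    (A : Type*) [CommGroup A] [Finite A] (hA : IsPGroup p A)
    (B : Type*) [Group B] (b : B) (hb : ∀ g : B, g ∈ Subgroup.zpowers b) (hbord : orderOf b = q)
    (φ : B →* MulAut A) :
    ∀ x y : (MonoidAlgebra F (A ⋊[φ] B))ˣ,
      (x : MonoidAlgebra F (A ⋊[φ] B)) - 1 ∈ RingHom.ker (MonoidAlgebra.mapDomainRingHom F
        (SemidirectProduct.rightHom : A ⋊[φ] B →* B)) →
      (y : MonoidAlgebra F (A ⋊[φ] B)) - 1 ∈ RingHom.ker (MonoidAlgebra.mapDomainRingHom F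
        (SemidirectProduct.rightHom : A ⋊[φ] B →* B)) →
      Commute x (grpUnit F (A ⋊[φ] B) (SemidirectProduct.inr b)) →
      Commute y (grpUnit F (A ⋊[φ] B) (SemidirectProduct.inr b)) →
      Commute x y := by
  intro x y _ _ hx hy
  have hfo : IsOfFinOrder b := orderOf_pos_iff.mp (hbord ▸ hq.pos)
  have hBfin : Finite B := by
    have h1 : ((Subgroup.zpowers b : Subgroup B) : Set B).Finite := hfo.finite_zpowers
    exact Set.finite_univ_iff.mp (h1.subset (fun g _ => hb g))
  have hGfin : Finite (A ⋊[φ] B) :=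
    Finite.of_injective (fun g : A ⋊[φ] B => (g.left, g.right))
      (fun g₁ g₂ h => SemidirectProduct.ext (congrArg Prod.fst h) (congrArg Prod.snd h))
  letI : Fintype (A ⋊[φ] B) := @Fintype.ofFinite _ hGfin
  have hB : ∀ c d : B, c * d = d * c := by
    intro c d
    obtain ⟨m, rfl⟩ := hb c
    obtain ⟨n, rfl⟩ := hb d
    rw [← zpow_add, ← zpow_add, add_comm]
  have hux := conj_inv_of_commute b hb x hx
  have huy := conj_inv_of_commute b hb y hy
  have h := comm_of_conj_inv (F := F) (φ := φ) hB (↑x) (↑y) hux huy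
  exact Units.ext (by simp only [Units.val_mul]; exact h)
end
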